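/- Let α > 0, β > 0, b > 0, d > 0 and c < 0 be real, and assume that αbd·q² ≠ −β²c for every integer q. Then there exists a constant M > 0, depending only on (α, β, b, c, d), such that for every pair (p,q) ∈ ℕ×ℤ with (p,q) ≠ (0,0) and Δ(p,q) := q²(1+αbp²)(1+αdp²) + β²p²(αcp² − 1) ≠ 0, one has A(p,q) := (p|q|(1+αdp²) + βp²(1 − αcp²)) / |Δ(p,q)| ≤ M and B(p,q) := (βp² + p|q|(1+αbp²)) / |Δ(p,q)| ≤ M. -/

import Mathlib

/-- Auxiliary: the combined ratio `(A(p,q)+B(p,q))`-numerator over `|Δ(p,q)|`. -/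
noncomputable def abcdF (α β b c d : ℝ) (x : ℕ × ℤ) : ℝ :=
  ((x.1 : ℝ) * |(x.2 : ℝ)| * (1 + α * d * (x.1 : ℝ) ^ 2) +
      β * (x.1 : ℝ) ^ 2 * (1 - α * c * (x.1 : ℝ) ^ 2) +
      (β * (x.1 : ℝ) ^ 2 + (x.1 : ℝ) * |(x.2 : ℝ)| * (1 + α * b * (x.1 : ℝ) ^ 2))) /
    |(x.2 : ℝ) ^ 2 * (1 + α * b * (x.1 : ℝ) ^ 2) * (1 + α * d * (x.1 : ℝ) ^ 2) +
        β ^ 2 * (x.1 : ℝ) ^ 2 * (α * c * (x.1 : ℝ) ^ 2 - 1)|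

lemma abcdF_nonneg (α β b c d : ℝ) (hα : 0 < α) (hβ : 0 < β)
    (hb : 0 < b) (hd : 0 < d) (hc : c < 0) (x : ℕ × ℤ) : 0 ≤ abcdF α β b c d x := by
  unfold abcdF
  apply div_nonneg _ (abs_nonneg _)
  have h1 : (0:ℝ) ≤ 1 - α * c * (x.1 : ℝ) ^ 2 := by
    linarith [mul_nonneg (mul_nonneg hα.le (neg_nonneg.mpr hc.le)) (sq_nonneg ((x.1:ℝ)))]
  have h2 : (0:ℝ) ≤ (x.1 : ℝ) := Nat.cast_nonneg _
  have h3 : (0:ℝ) ≤ |(x.2 : ℝ)| := abs_nonneg _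
  have h4 : (0:ℝ) ≤ 1 + α * d * (x.1 : ℝ) ^ 2 := by positivity
  have h5 : (0:ℝ) ≤ 1 + α * b * (x.1 : ℝ) ^ 2 := by positivity
  have h6 : (0:ℝ) ≤ β * (x.1 : ℝ) ^ 2 := by positivity
  linarith [mul_nonneg (mul_nonneg h2 h3) h4, mul_nonneg (mul_nonneg h2 h3) h5,
    mul_nonneg h6 h1]

set_option maxHeartbeats 2000000 in
/-- Uniform bound for the quantities `A(p,q)` and `B(p,q)` for the abcd-system with
`a = 0`, `b > 0`, `c < 0`, `d > 0`, on the noncritical modes. -/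
theorem abcd_AB_bound (α β b c d : ℝ) (hα : 0 < α) (hβ : 0 < β)
    (hb : 0 < b) (hd : 0 < d) (hc : c < 0)
    (hnd : ∀ q : ℤ, α * b * d * (q : ℝ) ^ 2 ≠ -(β ^ 2 * c)) :
    ∃ M : ℝ, 0 < M ∧ ∀ p : ℕ, ∀ q : ℤ, (p, q) ≠ (0, 0) →
      (q : ℝ) ^ 2 * (1 + α * b * (p : ℝ) ^ 2) * (1 + α * d * (p : ℝ) ^ 2) +
          β ^ 2 * (p : ℝ) ^ 2 * (α * c * (p : ℝ) ^ 2 - 1) ≠ 0 →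
      ((p : ℝ) * |(q : ℝ)| * (1 + α * d * (p : ℝ) ^ 2) +
          β * (p : ℝ) ^ 2 * (1 - α * c * (p : ℝ) ^ 2)) /
        |(q : ℝ) ^ 2 * (1 + α * b * (p : ℝ) ^ 2) * (1 + α * d * (p : ℝ) ^ 2) +
          β ^ 2 * (p : ℝ) ^ 2 * (α * c * (p : ℝ) ^ 2 - 1)| ≤ M ∧
      (β * (p : ℝ) ^ 2 + (p : ℝ) * |(q : ℝ)| * (1 + α * b * (p : ℝ) ^ 2)) /
        |(q : ℝ) ^ 2 * (1 + α * b * (p : ℝ) ^ 2) * (1 + α * d * (p : ℝ) ^ 2) +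
          β ^ 2 * (p : ℝ) ^ 2 * (α * c * (p : ℝ) ^ 2 - 1)| ≤ M := by
  have hαc : (0:ℝ) < 1 - α * c := by nlinarith
  -- the constant C₀
  set C₀ : ℝ := β ^ 2 * (1 - α * c) / (α ^ 2 * b * d) with hC₀def
  have hC₀ : 0 < C₀ := by
    exact div_pos (mul_pos (pow_pos hβ 2) hαc) (by positivity)
  have hC₀mul : C₀ * (α ^ 2 * b * d) = β ^ 2 * (1 - α * c) := by
    rw [hC₀def]; exact div_mul_cancel₀ _ (by positivity)
  -- the bound Q0 on |q| in the small-q regime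
  set Q0 : ℕ := ⌈2 * C₀⌉₊ with hQ0def
  have hQ0 : 2 * C₀ ≤ (Q0 : ℝ) := Nat.le_ceil _
  have hIccne : (Finset.Icc (-(Q0:ℤ)) (Q0:ℤ)).Nonempty :=
    ⟨0, by simp [Finset.mem_Icc]⟩
  -- the gap δ
  set δ : ℝ := (Finset.Icc (-(Q0:ℤ)) (Q0:ℤ)).inf' hIccne
      (fun q => |α * b * d * (q:ℝ) ^ 2 + β ^ 2 * c|) with hδdef
  have hδpos : 0 < δ := by
    rw [hδdef, Finset.lt_inf'_iff]
    intro q _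
    rw [abs_pos]
    intro h0
    exact hnd q (by linarith)
  have hδle : ∀ q : ℤ, |q| ≤ (Q0:ℤ) →
      δ ≤ |α * b * d * (q:ℝ) ^ 2 + β ^ 2 * c| := by
    intro q hq
    apply Finset.inf'_le
    rw [Finset.mem_Icc]
    rw [abs_le] at hq
    exact hq
  set K : ℝ := 2 * C₀ + α * (b + d) * (2 * C₀) + β ^ 2 with hKdef
  have hK : 0 < K := by positivity
  set P₁ : ℕ := ⌈2 * K / (α * δ)⌉₊ with hP₁def
  have hP₁ : 2 * K / (α * δ) ≤ (P₁ : ℝ) := Nat.le_ceil _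
  -- the finite bad-set contribution
  set M₁ : ℝ := ∑ x ∈ Finset.range (P₁ + 1) ×ˢ Finset.Icc (-(Q0:ℤ)) (Q0:ℤ),
      abcdF α β b c d x with hM₁def
  have hM₁ : 0 ≤ M₁ :=
    Finset.sum_nonneg fun x _ => abcdF_nonneg α β b c d hα hβ hb hd hc x
  -- the case constants
  set c₁ : ℝ := (2 * β + α * b) / (α * b * β) with hc₁def
  set c₂ : ℝ := (α * d + 2 * β) / (β * (α * d)) with hc₂def
  set c₃ : ℝ := 2 * (2 * C₀ * (1 + α * d) + β * (1 - α * c)) / (α * δ) with hc₃def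
  set c₄ : ℝ := 2 * (β + 2 * C₀ * (1 + α * b)) / (α * δ) with hc₄def
  have hc₁ : 0 ≤ c₁ := by positivity
  have hc₂ : 0 ≤ c₂ := by positivity
  have hc₃ : 0 ≤ c₃ := by
    apply div_nonneg _ (by positivity)
    have h1 := mul_nonneg hC₀.le (by positivity : (0:ℝ) ≤ 1 + α * d)
    have h2 := mul_nonneg hβ.le hαc.le
    linarith
  have hc₄ : 0 ≤ c₄ := by
    apply div_nonneg _ (by positivity)
    have h1 := mul_nonneg hC₀.le (by positivity : (0:ℝ) ≤ 1 + α * b)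
    linarith
  clear_value C₀ Q0 δ K P₁ M₁ c₁ c₂ c₃ c₄
  refine ⟨c₁ + c₂ + c₃ + c₄ + M₁ + 1, by linarith, ?_⟩
  intro p q hpq hΔ
  set X : ℝ := (p : ℝ) with hXdef
  set Y : ℝ := (q : ℝ) with hYdef
  set D : ℝ := Y ^ 2 * (1 + α * b * X ^ 2) * (1 + α * d * X ^ 2) +
      β ^ 2 * X ^ 2 * (α * c * X ^ 2 - 1) with hDdef
  clear_value X Y D
  have hΔabs : 0 < |D| := abs_pos.mpr hΔ
  by_cases hp : p = 0
  · subst hp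
    have hX0 : X = 0 := by rw [hXdef]; norm_num
    rw [hX0]
    norm_num
    linarith
  · -- p ≥ 1
    have hp1 : (1:ℝ) ≤ X := by
      rw [hXdef]; exact_mod_cast Nat.one_le_iff_ne_zero.mpr hp
    have hX0 : (0:ℝ) ≤ X := by linarith
    have hX2ge1 : (1:ℝ) ≤ X ^ 2 := by linarith [mul_le_mul hp1 hp1 zero_le_one hX0]
    have hPb : (0:ℝ) < 1 + α * b * X ^ 2 := by positivity
    have hPd : (0:ℝ) < 1 + α * d * X ^ 2 := by positivity
    have hQc : (0:ℝ) ≤ 1 - α * c * X ^ 2 := by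
      linarith [mul_nonneg (mul_nonneg hα.le (neg_nonneg.mpr hc.le)) (sq_nonneg X)]
    have hC₀m4 : C₀ * (α ^ 2 * b * d) * X ^ 4 = β ^ 2 * (1 - α * c) * X ^ 4 := by
      rw [hC₀mul]
    have hbd : (0:ℝ) ≤ b + d := by linarith
    by_cases hq2 : 2 * C₀ ≤ Y ^ 2
    · -- Case 1 : large q
      have hqne : q ≠ 0 := by
        intro h
        rw [hYdef, h] at hq2
        norm_num at hq2
        linarith
      have hq1 : (1:ℝ) ≤ |Y| := by
        rw [hYdef, ← Int.cast_abs]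
        exact_mod_cast Int.one_le_abs hqne
      have hYabs : (0:ℝ) ≤ |Y| := abs_nonneg _
      have hβlow : β ^ 2 * X ^ 2 * (1 - α * c * X ^ 2) ≤
          C₀ * ((1 + α * b * X ^ 2) * (1 + α * d * X ^ 2)) := by
        linarith [hC₀m4,
          mul_nonneg (sq_nonneg β)
            (show (0:ℝ) ≤ X ^ 4 - X ^ 2 by
              linarith [mul_nonneg (sq_nonneg X) (sub_nonneg.mpr hX2ge1)]),
          mul_nonneg hC₀.le (mul_nonneg (mul_nonneg hα.le hbd) (sq_nonneg X)), hC₀.le]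
      have hβlow2 : β ^ 2 * X ^ 2 ≤
          C₀ * ((1 + α * b * X ^ 2) * (1 + α * d * X ^ 2)) := by
        linarith [hβlow, mul_nonneg (mul_nonneg (sq_nonneg β) (sq_nonneg X))
          (mul_nonneg (mul_nonneg hα.le (neg_nonneg.mpr hc.le)) (sq_nonneg X))]
      have hΔlb : Y ^ 2 / 2 * ((1 + α * b * X ^ 2) * (1 + α * d * X ^ 2)) ≤ D := by
        rw [hDdef]
        linarith [hβlow, mul_le_mul_of_nonneg_right
          (show C₀ ≤ Y ^ 2 / 2 by linarith) (mul_pos hPb hPd).le]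
      have hΔlbabs : Y ^ 2 / 2 * ((1 + α * b * X ^ 2) * (1 + α * d * X ^ 2)) ≤ |D| :=
        hΔlb.trans (le_abs_self _)
      have hQP : (1:ℝ) ≤ |Y| * X := by
        linarith [mul_le_mul hq1 hp1 zero_le_one hYabs]
      have habs0 : (0:ℝ) ≤ |Y| * X := mul_nonneg hYabs hX0
      have h0 : |Y| * X ≤ Y ^ 2 * X ^ 2 := by
        have h := mul_le_mul_of_nonneg_left hQP habs0
        have h2 : |Y| * X * (|Y| * X) = Y ^ 2 * X ^ 2 := by
          rw [show |Y| * X * (|Y| * X) = |Y| ^ 2 * X ^ 2 by ring, sq_abs]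
        rw [h2, mul_one] at h
        exact h
      have h_t1 : α * b * (X * |Y|) ≤ Y ^ 2 * (1 + α * b * X ^ 2) := by
        have h := mul_le_mul_of_nonneg_left h0 (mul_pos hα hb).le
        linarith [h, sq_nonneg Y]
      have h_t2 : α * d * (X * |Y|) ≤ Y ^ 2 * (1 + α * d * X ^ 2) := by
        have h := mul_le_mul_of_nonneg_left h0 (mul_pos hα hd).le
        linarith [h, sq_nonneg Y]
      constructor
      · -- A bound, case 1
        have hmul : (α * b * β) *
            (X * |Y| * (1 + α * d * X ^ 2) + β * X ^ 2 * (1 - α * c * X ^ 2)) ≤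
            (2 * β + α * b) *
              (Y ^ 2 / 2 * ((1 + α * b * X ^ 2) * (1 + α * d * X ^ 2))) := by
          have h1 := mul_le_mul_of_nonneg_right h_t1 (mul_nonneg hβ.le hPd.le)
          have h2 := mul_le_mul_of_nonneg_left hβlow (mul_pos hα hb).le
          have h3 := mul_le_mul_of_nonneg_right
            (show C₀ ≤ Y ^ 2 / 2 by linarith)
            (mul_nonneg (mul_pos hα hb).le (mul_pos hPb hPd).le)
          linarith [h1, h2, h3]
        have hc₁mul : (α * b * β) *
            (c₁ * (Y ^ 2 / 2 * ((1 + α * b * X ^ 2) * (1 + α * d * X ^ 2)))) =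
            (2 * β + α * b) *
              (Y ^ 2 / 2 * ((1 + α * b * X ^ 2) * (1 + α * d * X ^ 2))) := by
          rw [hc₁def]; field_simp
        have habβ : (0:ℝ) < α * b * β := by positivity
        have hfin : X * |Y| * (1 + α * d * X ^ 2) + β * X ^ 2 * (1 - α * c * X ^ 2) ≤
            c₁ * |D| := by
          have h4 := mul_le_mul_of_nonneg_left hΔlbabs hc₁
          have h5 := mul_le_mul_of_nonneg_left h4 habβ.le
          refine le_of_mul_le_mul_left ?_ habβ
          linarith [hmul, hc₁mul, h5]
        have := (div_le_iff₀ hΔabs).mpr hfin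
        linarith
      · -- B bound, case 1
        have hmul : (β * (α * d)) *
            (β * X ^ 2 + X * |Y| * (1 + α * b * X ^ 2)) ≤
            (α * d + 2 * β) *
              (Y ^ 2 / 2 * ((1 + α * b * X ^ 2) * (1 + α * d * X ^ 2))) := by
          have h1 := mul_le_mul_of_nonneg_right h_t2 (mul_nonneg hβ.le hPb.le)
          have h2 := mul_le_mul_of_nonneg_left hβlow2 (mul_pos hα hd).le
          have h3 := mul_le_mul_of_nonneg_right
            (show C₀ ≤ Y ^ 2 / 2 by linarith)
            (mul_nonneg (mul_pos hα hd).le (mul_pos hPb hPd).le)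
          linarith [h1, h2, h3]
        have hc₂mul : (β * (α * d)) *
            (c₂ * (Y ^ 2 / 2 * ((1 + α * b * X ^ 2) * (1 + α * d * X ^ 2)))) =
            (α * d + 2 * β) *
              (Y ^ 2 / 2 * ((1 + α * b * X ^ 2) * (1 + α * d * X ^ 2))) := by
          rw [hc₂def]; field_simp
        have habβ : (0:ℝ) < β * (α * d) := by positivity
        have hfin : β * X ^ 2 + X * |Y| * (1 + α * b * X ^ 2) ≤ c₂ * |D| := by
          have h4 := mul_le_mul_of_nonneg_left hΔlbabs hc₂
          have h5 := mul_le_mul_of_nonneg_left h4 habβ.le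
          refine le_of_mul_le_mul_left ?_ habβ
          linarith [hmul, hc₂mul, h5]
        have := (div_le_iff₀ hΔabs).mpr hfin
        linarith
    · -- small q : Y² < 2C₀
      push_neg at hq2
      have hqabsZ : |q| ≤ q ^ 2 := by
        rcases eq_or_ne q 0 with h | h
        · simp [h]
        · have h1 := Int.one_le_abs h
          nlinarith [abs_nonneg q, sq_abs q]
      have hqabs : |Y| ≤ Y ^ 2 := by
        rw [hYdef, ← Int.cast_abs]
        exact_mod_cast hqabsZ
      have hqQ0 : |q| ≤ (Q0 : ℤ) := by
        have h1 : ((|q| : ℤ) : ℝ) ≤ ((Q0 : ℕ) : ℝ) := by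
          rw [Int.cast_abs, ← hYdef]
          linarith
        exact_mod_cast h1
      have hS := hδle q hqQ0
      rw [← hYdef] at hS
      by_cases hpP : p ≤ P₁
      · -- Case 3 : finite bad set
        have hmem : (p, q) ∈ Finset.range (P₁ + 1) ×ˢ Finset.Icc (-(Q0:ℤ)) (Q0:ℤ) := by
          rw [Finset.mem_product, Finset.mem_range, Finset.mem_Icc]
          rw [abs_le] at hqQ0
          exact ⟨by omega, hqQ0⟩
        have hfM : abcdF α β b c d (p, q) ≤ M₁ := by
          rw [hM₁def]
          exact Finset.single_le_sum
            (fun x _ => abcdF_nonneg α β b c d hα hβ hb hd hc x) hmem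
        have hfeq : abcdF α β b c d (p, q) =
            (X * |Y| * (1 + α * d * X ^ 2) + β * X ^ 2 * (1 - α * c * X ^ 2) +
              (β * X ^ 2 + X * |Y| * (1 + α * b * X ^ 2))) / |D| := by
          rw [hDdef, hXdef, hYdef]; rfl
        rw [hfeq] at hfM
        have hNB0 : (0:ℝ) ≤ β * X ^ 2 + X * |Y| * (1 + α * b * X ^ 2) := by positivity
        have hNA0 : (0:ℝ) ≤ X * |Y| * (1 + α * d * X ^ 2) +
            β * X ^ 2 * (1 - α * c * X ^ 2) := by
          have h1 : (0:ℝ) ≤ β * X ^ 2 * (1 - α * c * X ^ 2) :=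
            mul_nonneg (mul_nonneg hβ.le (sq_nonneg X)) hQc
          have h2 : (0:ℝ) ≤ X * |Y| * (1 + α * d * X ^ 2) := by positivity
          linarith
        constructor
        · have h2 : (X * |Y| * (1 + α * d * X ^ 2) + β * X ^ 2 * (1 - α * c * X ^ 2)) / |D| ≤
              (X * |Y| * (1 + α * d * X ^ 2) + β * X ^ 2 * (1 - α * c * X ^ 2) +
                (β * X ^ 2 + X * |Y| * (1 + α * b * X ^ 2))) / |D| := by
            exact (div_le_div_iff_of_pos_right hΔabs).mpr (by linarith)
          linarith [hfM, h2]
        · have h2 : (β * X ^ 2 + X * |Y| * (1 + α * b * X ^ 2)) / |D| ≤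
              (X * |Y| * (1 + α * d * X ^ 2) + β * X ^ 2 * (1 - α * c * X ^ 2) +
                (β * X ^ 2 + X * |Y| * (1 + α * b * X ^ 2))) / |D| := by
            exact (div_le_div_iff_of_pos_right hΔabs).mpr (by linarith)
          linarith [hfM, h2]
      · -- Case 2 : small q, large p
        have hpP1 : (P₁ : ℝ) ≤ X := by
          rw [hXdef]
          exact_mod_cast (Nat.not_le.mp hpP).le
        have hXX : X ≤ X ^ 2 := by
          linarith [mul_nonneg hX0 (sub_nonneg.mpr hp1)]
        have hX24 : X ^ 2 ≤ X ^ 4 := by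
          linarith [mul_nonneg (sq_nonneg X) (sub_nonneg.mpr hX2ge1)]
        have hX2K : 2 * K / (α * δ) ≤ X ^ 2 := le_trans hP₁ (le_trans hpP1 hXX)
        have hαδ : (0:ℝ) < α * δ := mul_pos hα hδpos
        have h2K : 2 * K ≤ α * δ * X ^ 2 := by
          rw [div_le_iff₀ hαδ] at hX2K
          linarith [hX2K]
        have hKX : K * X ^ 2 ≤ α * δ / 2 * X ^ 4 := by
          have h := mul_le_mul_of_nonneg_right h2K (sq_nonneg X)
          linarith [h]
        have hY2 : Y ^ 2 ≤ 2 * C₀ := hq2.le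
        have hE : |Y ^ 2 + (α * (b + d) * Y ^ 2 - β ^ 2) * X ^ 2| ≤ K * X ^ 2 := by
          have ht : Y ^ 2 * X ^ 2 ≤ 2 * C₀ * X ^ 2 :=
            mul_le_mul_of_nonneg_right hY2 (sq_nonneg X)
          have ht2 : α * (b + d) * (Y ^ 2 * X ^ 2) ≤ α * (b + d) * (2 * C₀ * X ^ 2) :=
            mul_le_mul_of_nonneg_left ht (mul_nonneg hα.le hbd)
          have ht3 : (0:ℝ) ≤ α * (b + d) * (Y ^ 2 * X ^ 2) :=
            mul_nonneg (mul_nonneg hα.le hbd) (mul_nonneg (sq_nonneg Y) (sq_nonneg X))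
          have ht4 : (0:ℝ) ≤ C₀ * X ^ 2 := mul_nonneg hC₀.le (sq_nonneg X)
          have ht5 : (0:ℝ) ≤ α * (b + d) * (C₀ * X ^ 2) :=
            mul_nonneg (mul_nonneg hα.le hbd) ht4
          have ht6 : (0:ℝ) ≤ C₀ * (X ^ 2 - 1) := mul_nonneg hC₀.le (by linarith)
          have ht7 : (0:ℝ) ≤ β ^ 2 * X ^ 2 := mul_nonneg (sq_nonneg β) (sq_nonneg X)
          rw [abs_le, hKdef]
          constructor
          · linarith [sq_nonneg Y, ht3, ht4, ht5]
          · linarith [ht, ht2, ht6, ht7]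
        have hDeq : D = α * (α * b * d * Y ^ 2 + β ^ 2 * c) * X ^ 4 +
            (Y ^ 2 + (α * (b + d) * Y ^ 2 - β ^ 2) * X ^ 2) := by
          rw [hDdef]; ring
        have hSabs : α * δ * X ^ 4 ≤ |α * (α * b * d * Y ^ 2 + β ^ 2 * c) * X ^ 4| := by
          rw [abs_mul, abs_mul, abs_of_pos hα, abs_of_nonneg (pow_nonneg hX0 4)]
          have h1 := mul_le_mul_of_nonneg_left hS hα.le
          have h2 := mul_le_mul_of_nonneg_right h1 (pow_nonneg hX0 4)
          linarith [h2]
        have hDlb : α * δ / 2 * X ^ 4 ≤ |D| := by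
          have h1 := abs_add_le D (-(Y ^ 2 + (α * (b + d) * Y ^ 2 - β ^ 2) * X ^ 2))
          rw [abs_neg] at h1
          have h2 : D + -(Y ^ 2 + (α * (b + d) * Y ^ 2 - β ^ 2) * X ^ 2) =
              α * (α * b * d * Y ^ 2 + β ^ 2 * c) * X ^ 4 := by
            rw [hDeq]; ring
          rw [h2] at h1
          linarith [hSabs, hE, hKX, h1]
        have hYlt : |Y| ≤ 2 * C₀ := le_trans hqabs hY2
        have hX2le4 : β * X ^ 2 ≤ β * X ^ 4 := mul_le_mul_of_nonneg_left hX24 hβ.le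
        have hX34d : X * (1 + α * d * X ^ 2) ≤ (1 + α * d) * X ^ 4 := by
          have e1 : X ≤ X ^ 4 := le_trans hXX hX24
          have e2 : (0:ℝ) ≤ α * d * (X * X ^ 2 * (X - 1)) :=
            mul_nonneg (mul_nonneg hα.le hd.le)
              (mul_nonneg (mul_nonneg hX0 (sq_nonneg X)) (by linarith))
          linarith [e1, e2]
        have hX34b : X * (1 + α * b * X ^ 2) ≤ (1 + α * b) * X ^ 4 := by
          have e1 : X ≤ X ^ 4 := le_trans hXX hX24
          have e2 : (0:ℝ) ≤ α * b * (X * X ^ 2 * (X - 1)) :=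
            mul_nonneg (mul_nonneg hα.le hb.le)
              (mul_nonneg (mul_nonneg hX0 (sq_nonneg X)) (by linarith))
          linarith [e1, e2]
        constructor
        · -- A bound, case 2
          have t1 : |Y| * (X * (1 + α * d * X ^ 2)) ≤ (2 * C₀) * ((1 + α * d) * X ^ 4) :=
            mul_le_mul hYlt hX34d (by positivity) (by linarith)
          have t2 : β * X ^ 2 * (1 - α * c * X ^ 2) ≤ β * (1 - α * c) * X ^ 4 := by
            have h3 := mul_le_mul_of_nonneg_left hX24 hβ.le
            linarith [h3]
          have hNA : X * |Y| * (1 + α * d * X ^ 2) + β * X ^ 2 * (1 - α * c * X ^ 2) ≤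
              (2 * C₀ * (1 + α * d) + β * (1 - α * c)) * X ^ 4 := by
            linarith [t1, t2]
          have hc₃mul : c₃ * (α * δ / 2 * X ^ 4) =
              (2 * C₀ * (1 + α * d) + β * (1 - α * c)) * X ^ 4 := by
            rw [hc₃def]
            field_simp
          have h4 := mul_le_mul_of_nonneg_left hDlb hc₃
          have hfin : X * |Y| * (1 + α * d * X ^ 2) + β * X ^ 2 * (1 - α * c * X ^ 2) ≤
              c₃ * |D| := by linarith [hNA, hc₃mul, h4]
          have := (div_le_iff₀ hΔabs).mpr hfin
          linarith
        · -- B bound, case 2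
          have t1 : |Y| * (X * (1 + α * b * X ^ 2)) ≤ (2 * C₀) * ((1 + α * b) * X ^ 4) :=
            mul_le_mul hYlt hX34b (by positivity) (by linarith)
          have hNB : β * X ^ 2 + X * |Y| * (1 + α * b * X ^ 2) ≤
              (β + 2 * C₀ * (1 + α * b)) * X ^ 4 := by
            linarith [t1, hX2le4]
          have hc₄mul : c₄ * (α * δ / 2 * X ^ 4) =
              (β + 2 * C₀ * (1 + α * b)) * X ^ 4 := by
            rw [hc₄def]
            field_simp
          have h4 := mul_le_mul_of_nonneg_left hDlb hc₄
          have hfin : β * X ^ 2 + X * |Y| * (1 + α * b * X ^ 2) ≤ c₄ * |D| := by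
            linarith [hNB, hc₄mul, h4]
          have := (div_le_iff₀ hΔabs).mpr hfin
          linarith
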